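/- Under assumptions A1–A4, if every worker computes a deterministic full-batch subgradient and the Euclidean norm of every subgradient of every F_j is bounded by a constant L, then for every constant learning rate η > 0, every node i, and every K ≥ 1: F(ŵ_i(K−1)) − F* ≤ (M/(2ηK))·dist(w̄(0), W*)² + ηML²/2 + L·(3M^{3/2}√R/K)·(1−|λ2|^K)/(1−|λ2|) + (3ηM^{3/2}L²/(1−|λ2|))·(1 − (1/K)·(1−|λ2|^K)/(1−|λ2|)). -/

import Mathlib

open MeasureTheory Matrix Finset

noncomputable section

/-- Squared Frobenius norm of a real matrix. -/
def frobSq {n M : ℕ} (B : Matrix (Fin n) (Fin M) ℝ) : ℝ := ∑ i, ∑ j, B i j ^ 2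

/-- Frobenius norm of a real matrix. -/
def frobNorm {n M : ℕ} (B : Matrix (Fin n) (Fin M) ℝ) : ℝ := Real.sqrt (frobSq B)

/-- Squared Frobenius norm of a complex matrix. -/
def frobSqC {n M : ℕ} (B : Matrix (Fin n) (Fin M) ℂ) : ℝ := ∑ i, ∑ j, ‖B i j‖ ^ 2

/-- The `j`-th column of a matrix, viewed as a vector of `EuclideanSpace ℝ (Fin n)`. -/
def col {n M : ℕ} (B : Matrix (Fin n) (Fin M) ℝ) (j : Fin M) : EuclideanSpace ℝ (Fin n) :=
  WithLp.toLp 2 (fun i => B i j)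

/-- `ΔB := B (I - 𝟙𝟙ᵀ/M)`: subtract from every column the average of all columns. -/
def ctr {n M : ℕ} (B : Matrix (Fin n) (Fin M) ℝ) : Matrix (Fin n) (Fin M) ℝ :=
  Matrix.of fun i j => B i j - (∑ j', B i j') / M

/-- The average of the columns of `B` (the average model `w̄`). -/
def colAvg {n M : ℕ} (B : Matrix (Fin n) (Fin M) ℝ) : EuclideanSpace ℝ (Fin n) :=
  WithLp.toLp 2 (fun i => (∑ j, B i j) / M)

/-- Time average of a sequence of vectors over iterations `0, …, K-1`. -/
def timeAvg {n : ℕ} (K : ℕ) (v : ℕ → EuclideanSpace ℝ (Fin n)) : EuclideanSpace ℝ (Fin n) :=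
  WithLp.toLp 2 (fun i => (∑ k ∈ Finset.range K, v k i) / K)

/-- `g` is a subgradient of `f` at `x`. -/
def IsSubgradAt {n : ℕ} (f : EuclideanSpace ℝ (Fin n) → ℝ)
    (g x : EuclideanSpace ℝ (Fin n)) : Prop :=
  ∀ y, f x + (inner ℝ g (y - x) : ℝ) ≤ f y

-- ===== chunk 1: Frobenius basics =====
namespace S8

variable {n M : ℕ}

def toE (B : Matrix (Fin n) (Fin M) ℝ) : EuclideanSpace ℝ (Fin n × Fin M) :=
  WithLp.toLp 2 (fun p : Fin n × Fin M => B p.1 p.2)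

lemma toE_sub (X Y : Matrix (Fin n) (Fin M) ℝ) : toE (X - Y) = toE X - toE Y := rfl

lemma toE_smul (c : ℝ) (X : Matrix (Fin n) (Fin M) ℝ) : toE (c • X) = c • toE X := rfl

lemma frobSq_nonneg (B : Matrix (Fin n) (Fin M) ℝ) : 0 ≤ frobSq B := by
  unfold frobSq; positivity

lemma frobSq_eq_norm_toE_sq (B : Matrix (Fin n) (Fin M) ℝ) : frobSq B = ‖toE B‖ ^ 2 := by
  rw [EuclideanSpace.norm_eq, Real.sq_sqrt (by positivity)]
  rw [frobSq, Fintype.sum_prod_type]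
  simp [toE, Real.norm_eq_abs, sq_abs]

lemma frobNorm_eq (B : Matrix (Fin n) (Fin M) ℝ) : frobNorm B = ‖toE B‖ := by
  rw [frobNorm, frobSq_eq_norm_toE_sq, Real.sqrt_sq (norm_nonneg _)]

lemma frobNorm_nonneg (B : Matrix (Fin n) (Fin M) ℝ) : 0 ≤ frobNorm B :=
  Real.sqrt_nonneg _

lemma frobNorm_sq (B : Matrix (Fin n) (Fin M) ℝ) : frobNorm B ^ 2 = frobSq B := by
  rw [frobNorm, Real.sq_sqrt (frobSq_nonneg B)]

lemma norm_col_sq (B : Matrix (Fin n) (Fin M) ℝ) (j : Fin M) :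
    ‖_root_.col B j‖ ^ 2 = ∑ i, B i j ^ 2 := by
  rw [EuclideanSpace.norm_eq, Real.sq_sqrt (by positivity)]
  simp [_root_.col, Real.norm_eq_abs, sq_abs]

lemma frobSq_eq_sum_col (B : Matrix (Fin n) (Fin M) ℝ) :
    frobSq B = ∑ j, ‖_root_.col B j‖ ^ 2 := by
  rw [frobSq, Finset.sum_comm]
  exact Finset.sum_congr rfl fun j _ => (norm_col_sq B j).symm

lemma norm_col_le (B : Matrix (Fin n) (Fin M) ℝ) (j : Fin M) : ‖_root_.col B j‖ ≤ frobNorm B := by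
  rw [frobNorm, ← Real.sqrt_sq (norm_nonneg (_root_.col B j))]
  apply Real.sqrt_le_sqrt
  rw [frobSq_eq_sum_col]
  exact Finset.single_le_sum (fun j _ => sq_nonneg ‖_root_.col B j‖) (Finset.mem_univ j)

lemma sum_norm_col_le (B : Matrix (Fin n) (Fin M) ℝ) :
    ∑ j, ‖_root_.col B j‖ ≤ Real.sqrt M * frobNorm B := by
  have h := sq_sum_le_card_mul_sum_sq (s := (Finset.univ : Finset (Fin M)))
    (f := fun j => ‖_root_.col B j‖)
  simp only [Finset.card_univ, Fintype.card_fin] at h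
  have h2 : (∑ j, ‖_root_.col B j‖) ^ 2 ≤ (Real.sqrt M * frobNorm B) ^ 2 := by
    rw [mul_pow, Real.sq_sqrt (by positivity), frobNorm_sq, frobSq_eq_sum_col]
    exact h
  have hs : 0 ≤ ∑ j, ‖_root_.col B j‖ := Finset.sum_nonneg fun j _ => norm_nonneg _
  have hb : 0 ≤ Real.sqrt M * frobNorm B := mul_nonneg (Real.sqrt_nonneg _) (frobNorm_nonneg B)
  nlinarith [h2, hs, hb]

lemma col_ctr (B : Matrix (Fin n) (Fin M) ℝ) (j : Fin M) :
    _root_.col (ctr B) j = _root_.col B j - colAvg B := rfl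

lemma colAvg_smul_sum (B : Matrix (Fin n) (Fin M) ℝ) :
    colAvg B = (M : ℝ)⁻¹ • ∑ j, _root_.col B j := by
  ext i
  simp only [colAvg, PiLp.smul_apply, smul_eq_mul]
  rw [div_eq_inv_mul]
  congr 1
  simp [_root_.col]

lemma colAvg_mul_right (B : Matrix (Fin n) (Fin M) ℝ) (A : Matrix (Fin M) (Fin M) ℝ)
    (hrows : ∀ l, ∑ j, A l j = 1) : colAvg (B * A) = colAvg B := by
  ext i
  simp only [colAvg, Matrix.mul_apply]
  rw [Finset.sum_comm]
  congr 1
  refine Finset.sum_congr rfl fun l _ => ?_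
  rw [← Finset.mul_sum, hrows, mul_one]

lemma colAvg_sub_smul (X Y : Matrix (Fin n) (Fin M) ℝ) (c : ℝ) :
    colAvg (X - c • Y) = colAvg X - c • colAvg Y := by
  ext i
  simp only [colAvg, Matrix.sub_apply, Matrix.smul_apply, PiLp.sub_apply, PiLp.smul_apply,
    smul_eq_mul, Finset.sum_sub_distrib, ← Finset.mul_sum]
  ring

lemma ctr_sub_smul (X Y : Matrix (Fin n) (Fin M) ℝ) (c : ℝ) :
    ctr (X - c • Y) = ctr X - c • ctr Y := by
  ext i j
  simp only [ctr, Matrix.of_apply, Matrix.sub_apply, Matrix.smul_apply, smul_eq_mul,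
    Finset.sum_sub_distrib, ← Finset.mul_sum]
  ring

lemma frobSq_ctr_le (hM : 0 < M) (B : Matrix (Fin n) (Fin M) ℝ) :
    frobSq (ctr B) ≤ frobSq B := by
  rw [frobSq, frobSq]
  refine Finset.sum_le_sum fun i _ => ?_
  have hM' : (0:ℝ) < M := by exact_mod_cast hM
  set s := ∑ j, B i j with hs
  have h1 : ∀ j : Fin M, (ctr B) i j ^ 2 = B i j ^ 2 - 2*(s/M)*B i j + (s/M)^2 := by
    intro j; simp only [ctr, Matrix.of_apply, ← hs]; ring
  rw [Finset.sum_congr rfl fun j _ => h1 j]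
  rw [Finset.sum_add_distrib, Finset.sum_sub_distrib, ← Finset.mul_sum, ← hs,
    Finset.sum_const, Finset.card_univ, Fintype.card_fin, nsmul_eq_mul]
  have key : -(2*(s/M)*s) + (M:ℝ)*(s/M)^2 = -(s^2/M) := by field_simp; ring
  have hnn : 0 ≤ s^2/M := by positivity
  linarith

lemma frobNorm_ctr_le (hM : 0 < M) (B : Matrix (Fin n) (Fin M) ℝ) :
    frobNorm (ctr B) ≤ frobNorm B :=
  Real.sqrt_le_sqrt (frobSq_ctr_le hM B)

lemma frobNorm_sub_smul_le (X Y : Matrix (Fin n) (Fin M) ℝ) (c : ℝ) (hc : 0 ≤ c) :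
    frobNorm (X - c • Y) ≤ frobNorm X + c * frobNorm Y := by
  rw [frobNorm_eq, frobNorm_eq, frobNorm_eq, toE_sub, toE_smul]
  refine (norm_sub_le _ _).trans ?_
  rw [norm_smul, Real.norm_eq_abs, abs_of_nonneg hc]

end S8

-- ===== chunk 2: spectral contraction =====
namespace S8

variable {n M Q : ℕ}

lemma star_mul_self_complex (z : ℂ) : star z * z = ((‖z‖ : ℂ)) ^ 2 := by
  have h : star z * z = (starRingEnd ℂ) z * z := rfl
  rw [h, mul_comm, Complex.mul_conj, Complex.normSq_eq_norm_sq]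
  simp

lemma trace_conjTranspose_mul_self (Z : Matrix (Fin n) (Fin M) ℂ) :
    Matrix.trace (Zᴴ * Z) = ((frobSqC Z : ℝ) : ℂ) := by
  simp only [Matrix.trace, Matrix.diag_apply, Matrix.mul_apply, Matrix.conjTranspose_apply,
    frobSqC]
  push_cast
  rw [Finset.sum_comm]
  exact Finset.sum_congr rfl fun i _ => Finset.sum_congr rfl fun j _ =>
    star_mul_self_complex (Z i j)

lemma frobSqC_nonneg (Z : Matrix (Fin n) (Fin M) ℂ) : 0 ≤ frobSqC Z := by
  unfold frobSqC; positivity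

lemma frobSqC_sum_orth (P : Fin Q → Matrix (Fin M) (Fin M) ℂ)
    (hherm : ∀ q, (P q)ᴴ = P q) (horth : ∀ q q', q ≠ q' → P q * P q' = 0)
    (X : Matrix (Fin n) (Fin M) ℂ) (c : Fin Q → ℂ) (s : Finset (Fin Q)) :
    frobSqC (∑ q ∈ s, c q • (X * P q)) = ∑ q ∈ s, ‖c q‖ ^ 2 * frobSqC (X * P q) := by
  have key : ∀ q q' : Fin Q, Matrix.trace ((X * P q)ᴴ * (X * P q'))
      = if q = q' then ((frobSqC (X * P q) : ℝ) : ℂ) else 0 := by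
    intro q q'
    split_ifs with h
    · subst h; exact trace_conjTranspose_mul_self _
    · rw [Matrix.conjTranspose_mul, hherm]
      calc Matrix.trace (P q * Xᴴ * (X * P q'))
          = Matrix.trace ((P q * Xᴴ) * (X * P q')) := rfl
        _ = Matrix.trace ((X * P q') * (P q * Xᴴ)) := Matrix.trace_mul_comm _ _
        _ = Matrix.trace (X * (P q' * P q) * Xᴴ) := by
            rw [Matrix.mul_assoc X (P q') _, ← Matrix.mul_assoc (P q') (P q) Xᴴ,
              ← Matrix.mul_assoc X (P q' * P q) Xᴴ]
        _ = 0 := by rw [horth q' q (Ne.symm h)]; simp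
  have main : ((frobSqC (∑ q ∈ s, c q • (X * P q)) : ℝ) : ℂ)
      = ((∑ q ∈ s, ‖c q‖ ^ 2 * frobSqC (X * P q) : ℝ) : ℂ) := by
    rw [← trace_conjTranspose_mul_self]
    rw [Matrix.conjTranspose_sum]
    simp only [Matrix.conjTranspose_smul]
    rw [Matrix.sum_mul, Matrix.trace_sum]
    have inner : ∀ q ∈ s, Matrix.trace (
        (star (c q) • (X * P q)ᴴ) * ∑ q' ∈ s, (c q' • (X * P q')))
        = ((‖c q‖ ^ 2 * frobSqC (X * P q) : ℝ) : ℂ) := by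
      intro q hq
      rw [Matrix.mul_sum, Matrix.trace_sum]
      have term : ∀ q' ∈ s, Matrix.trace ((star (c q) • (X * P q)ᴴ) * (c q' • (X * P q')))
          = if q' = q then ((‖c q‖ ^ 2 * frobSqC (X * P q) : ℝ) : ℂ) else 0 := by
        intro q' _
        rw [Matrix.smul_mul, Matrix.mul_smul, Matrix.trace_smul, Matrix.trace_smul, key]
        by_cases hqq : q = q'
        · subst hqq
          simp only [if_pos rfl]
          rw [smul_eq_mul, smul_eq_mul, ← mul_assoc, star_mul_self_complex]
          push_cast
          ring
        · rw [if_neg hqq, if_neg (Ne.symm hqq)]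
          simp
      rw [Finset.sum_congr rfl term, Finset.sum_ite_eq' s q
        (fun _ => ((‖c q‖ ^ 2 * frobSqC (X * P q) : ℝ) : ℂ)), if_pos hq]
    rw [Finset.sum_congr rfl inner]
    push_cast
    ring
  exact_mod_cast main

end S8

-- ===== chunk 3: spectral contraction main lemma =====
namespace S8

variable {n M Q : ℕ}

lemma frobSqC_map (C : Matrix (Fin n) (Fin M) ℝ) :
    frobSqC (C.map (fun x => (x : ℂ))) = frobSq C := by
  simp [frobSqC, frobSq, Matrix.map_apply, Complex.norm_real, Real.norm_eq_abs, sq_abs]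

lemma map_mul_complex (B : Matrix (Fin n) (Fin M) ℝ) (A : Matrix (Fin M) (Fin M) ℝ) :
    (B * A).map (fun x => (x : ℂ))
      = B.map (fun x => (x : ℂ)) * A.map (fun x => (x : ℂ)) := by
  ext i j
  simp only [Matrix.map_apply, Matrix.mul_apply]
  push_cast
  rfl

lemma spectral_contract (hM : 0 < M) (hQ : 1 < Q)
    (A : Matrix (Fin M) (Fin M) ℝ)
    (lam : Fin Q → ℂ) (P : Fin Q → Matrix (Fin M) (Fin M) ℂ)
    (hdecomp : A.map (fun x => (x : ℂ)) = ∑ q, lam q • P q)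
    (hherm : ∀ q, (P q)ᴴ = P q)
    (hidem : ∀ q, P q * P q = P q)
    (horth : ∀ q q', q ≠ q' → P q * P q' = 0)
    (hPsum : ∑ q, P q = 1)
    (hP1 : ∀ q : Fin Q, (q : ℕ) = 0 → P q = Matrix.of fun _ _ => (M : ℂ)⁻¹)
    (lam2 : ℝ) (hlam2nn : 0 ≤ lam2)
    (hbound : ∀ q : Fin Q, (q : ℕ) ≠ 0 → ‖lam q‖ ≤ lam2)
    (B : Matrix (Fin n) (Fin M) ℝ) :
    frobNorm (ctr (B * A)) ≤ lam2 * frobNorm (ctr B) := by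
  set q0 : Fin Q := ⟨0, by omega⟩ with hq0
  set s : Finset (Fin Q) := Finset.univ.erase q0 with hsdef
  set X : Matrix (Fin n) (Fin M) ℂ := B.map (fun x => (x : ℂ)) with hX
  have hne : ∀ q ∈ s, (q : ℕ) ≠ 0 := by
    intro q hq
    have := Finset.ne_of_mem_erase hq
    intro h0
    exact this (Fin.ext h0)
  -- (a) centering as right multiplication
  have hctr : ∀ C : Matrix (Fin n) (Fin M) ℝ,
      (ctr C).map (fun x => (x : ℂ)) = C.map (fun x => (x : ℂ)) * (1 - P q0) := by
    intro C
    ext i j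
    rw [hP1 q0 rfl]
    simp only [Matrix.map_apply, ctr, Matrix.of_apply, Matrix.mul_apply, Matrix.sub_apply,
      Matrix.one_apply, mul_sub, mul_ite, mul_one, mul_zero]
    rw [Finset.sum_sub_distrib, Finset.sum_ite_eq' Finset.univ j
      (fun l => ((C i l : ℂ))), if_pos (Finset.mem_univ j)]
    push_cast
    rw [div_eq_mul_inv, Finset.sum_mul]
  -- (b) sum of projectors on s
  have hsum_s : ∑ q ∈ s, P q = 1 - P q0 := by
    have h := Finset.sum_erase_add Finset.univ P (Finset.mem_univ q0)
    rw [hPsum] at h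
    rw [← hsdef] at h
    linear_combination (norm := module) h
  -- (c) A acting on centered part
  have hAc : A.map (fun x => (x : ℂ)) * (1 - P q0) = ∑ q ∈ s, lam q • P q := by
    rw [hdecomp, Matrix.sum_mul]
    have hterm : ∀ q : Fin Q, (lam q • P q) * (1 - P q0)
        = if q = q0 then 0 else lam q • P q := by
      intro q
      rw [Matrix.smul_mul, mul_sub, mul_one]
      split_ifs with h
      · subst h; rw [hidem]; simp
      · rw [horth q q0 h]; simp
    rw [Finset.sum_congr rfl fun q _ => hterm q]
    have hz : (if q0 = q0 then (0 : Matrix (Fin M) (Fin M) ℂ) else lam q0 • P q0) = 0 :=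
      if_pos rfl
    rw [← Finset.sum_erase (f := fun q => if q = q0 then 0 else lam q • P q)
      Finset.univ (a := q0) hz]
    refine Finset.sum_congr hsdef.symm fun q hq => ?_
    rw [if_neg (Finset.ne_of_mem_erase hq)]
  -- decompositions
  have h1 : (ctr (B * A)).map (fun x => (x : ℂ)) = ∑ q ∈ s, lam q • (X * P q) := by
    rw [hctr, map_mul_complex, Matrix.mul_assoc, hAc, Matrix.mul_sum]
    exact Finset.sum_congr rfl fun q _ => (Matrix.mul_smul _ _ _)
  have h2 : (ctr B).map (fun x => (x : ℂ)) = ∑ q ∈ s, (1 : ℂ) • (X * P q) := by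
    rw [hctr, ← hsum_s, Matrix.mul_sum]
    exact Finset.sum_congr rfl fun q _ => (one_smul _ _).symm
  -- squared norms
  have e1 : frobSq (ctr (B * A)) = ∑ q ∈ s, ‖lam q‖ ^ 2 * frobSqC (X * P q) := by
    rw [← frobSqC_map, h1, frobSqC_sum_orth P hherm horth]
  have e2 : frobSq (ctr B) = ∑ q ∈ s, frobSqC (X * P q) := by
    rw [← frobSqC_map, h2, frobSqC_sum_orth P hherm horth]
    simp
  have hle : frobSq (ctr (B * A)) ≤ lam2 ^ 2 * frobSq (ctr B) := by
    rw [e1, e2, Finset.mul_sum]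
    refine Finset.sum_le_sum fun q hq => ?_
    have h := hbound q (hne q hq)
    exact mul_le_mul_of_nonneg_right
      (by nlinarith [norm_nonneg (lam q)]) (frobSqC_nonneg _)
  calc frobNorm (ctr (B * A)) = Real.sqrt (frobSq (ctr (B * A))) := rfl
    _ ≤ Real.sqrt (lam2 ^ 2 * frobSq (ctr B)) := Real.sqrt_le_sqrt hle
    _ = lam2 * frobNorm (ctr B) := by
        rw [Real.sqrt_mul (sq_nonneg _), Real.sqrt_sq hlam2nn, frobNorm]

end S8

-- ===== chunk 4: existence of subgradients for convex functions =====
namespace S8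

lemma exists_subgrad {n : ℕ} (f : EuclideanSpace ℝ (Fin n) → ℝ)
    (hf : ConvexOn ℝ Set.univ f) (x : EuclideanSpace ℝ (Fin n)) :
    ∃ g, IsSubgradAt f g x := by
  classical
  have hcont : Continuous f := by
    have h := hf.continuousOn isOpen_univ
    rwa [continuousOn_univ] at h
  set S : Set (EuclideanSpace ℝ (Fin n) × ℝ) := {p | f p.1 < p.2} with hS
  have hopen : IsOpen S := by
    have h : S = {p : EuclideanSpace ℝ (Fin n) × ℝ | f p.1 - p.2 < 0} := by
      ext p; simp [hS, sub_neg]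
    rw [h]
    exact isOpen_lt ((hcont.comp continuous_fst).sub continuous_snd) continuous_const
  have hconvS : Convex ℝ S := by
    intro p hp q hq a b ha hb hab
    simp only [hS, Set.mem_setOf_eq] at hp hq ⊢
    have hfle := hf.2 (Set.mem_univ p.1) (Set.mem_univ q.1) ha hb hab
    have hab' : 0 < a ∨ 0 < b := by
      by_contra hcon
      push_neg at hcon
      have h1 : a = 0 := le_antisymm hcon.1 ha
      have h2 : b = 0 := le_antisymm hcon.2 hb
      rw [h1, h2] at hab; norm_num at hab
    have h1 : a * f p.1 + b * f q.1 < a * p.2 + b * q.2 := by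
      rcases hab' with h | h
      · have h2 := mul_lt_mul_of_pos_left hp h
        have h3 := mul_le_mul_of_nonneg_left hq.le hb
        linarith
      · have h2 := mul_lt_mul_of_pos_left hq h
        have h3 := mul_le_mul_of_nonneg_left hp.le ha
        linarith
    show f ((a • p + b • q).1) < (a • p + b • q).2
    have hfst : (a • p + b • q).1 = a • p.1 + b • q.1 := rfl
    have hsnd : (a • p + b • q).2 = a * p.2 + b * q.2 := rfl
    rw [hfst, hsnd]
    exact lt_of_le_of_lt hfle h1
  have hx : ((x, f x) : EuclideanSpace ℝ (Fin n) × ℝ) ∉ S := by simp [hS]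
  obtain ⟨φ, hφ⟩ := geometric_hahn_banach_open_point hconvS hopen hx
  set c : ℝ := φ (0, 1) with hc
  have hdec : ∀ (y : EuclideanSpace ℝ (Fin n)) (t : ℝ), φ (y, t) = φ (y, 0) + t * c := by
    intro y t
    have h1 : ((y, t) : EuclideanSpace ℝ (Fin n) × ℝ) = (y, 0) + t • ((0 : EuclideanSpace ℝ (Fin n)), (1 : ℝ)) := by
      simp [Prod.ext_iff]
    rw [h1, map_add, φ.map_smul, smul_eq_mul, hc]
  have hclt : c < 0 := by
    have h1 := hφ (x, f x + 1) (by simp [hS])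
    rw [hdec x (f x + 1), hdec x (f x)] at h1
    linarith
  have hkey : ∀ y, φ (y, 0) + f y * c ≤ φ (x, 0) + f x * c := by
    intro y
    have h2 : ∀ ε : ℝ, 0 < ε → φ (y, 0) + (f y + ε) * c < φ (x, 0) + f x * c := by
      intro ε hε
      have h3 := hφ (y, f y + ε) (by simp [hS]; linarith)
      rw [hdec y (f y + ε), hdec x (f x)] at h3
      exact h3
    by_contra hcon
    push_neg at hcon
    have hδ : 0 < (φ (y, 0) + f y * c) - (φ (x, 0) + f x * c) := by linarith
    set δ := (φ (y, 0) + f y * c) - (φ (x, 0) + f x * c) with hδdef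
    have hcp : 0 < -c := neg_pos.mpr hclt
    have h4 := h2 (δ / (-c)) (div_pos hδ hcp)
    have h5 : (δ / (-c)) * c = -δ := by rw [div_neg, neg_mul, div_mul_cancel₀ _ hclt.ne]
    have h6 : (f y + δ / (-c)) * c = f y * c + (δ / (-c)) * c := by ring
    rw [h6, h5] at h4
    linarith
  set v := (InnerProductSpace.toDual ℝ (EuclideanSpace ℝ (Fin n))).symm
    (φ.comp (ContinuousLinearMap.inl ℝ (EuclideanSpace ℝ (Fin n)) ℝ)) with hv
  have hval : ∀ z, (inner ℝ v z : ℝ) = φ (z, 0) := by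
    intro z
    rw [hv, InnerProductSpace.toDual_symm_apply]
    simp
  refine ⟨(-c)⁻¹ • v, ?_⟩
  intro y
  have h7 : (inner ℝ ((-c)⁻¹ • v) (y - x) : ℝ) = (-c)⁻¹ * (φ (y, 0) - φ (x, 0)) := by
    rw [real_inner_smul_left, hval (y - x)]
    congr 1
    have h8 : ((y - x, 0) : EuclideanSpace ℝ (Fin n) × ℝ) = (y, 0) - (x, 0) := by
      simp [Prod.ext_iff]
    rw [h8, map_sub]
  rw [h7]
  have h9 := hkey y
  have hcp : 0 < -c := neg_pos.mpr hclt
  have h10 : (-c)⁻¹ * (φ (y, 0) - φ (x, 0)) ≤ (-c)⁻¹ * ((f x - f y) * c) := by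
    apply mul_le_mul_of_nonneg_left _ (le_of_lt (inv_pos.mpr hcp))
    linarith
  have h11 : (-c)⁻¹ * ((f x - f y) * c) = f y - f x := by
    have hc0 := hclt.ne
    field_simp
    ring
  linarith

end S8


-- ===== chunk 5: the main theorem =====


set_option maxHeartbeats 1000000 in
/-- **Corollary 4, eq. (local, full batch).** Under assumptions A1–A4, with deterministic
full-batch subgradients whose Euclidean norms are bounded by `L`, the local time-averaged
model of every node `i` satisfies the classic bound. -/
theorem statement8
    (n M Q : ℕ) (hM : 0 < M) (hQ : 1 < Q)
    -- the consensus matrix: nonnegative, doubly stochastic (A4), normal (A4),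
    -- irreducible (strongly connected graph, A3) and primitive (positive diagonal)
    (A : Matrix (Fin M) (Fin M) ℝ)
    (hnonneg : ∀ i j, 0 ≤ A i j)
    (hrows : ∀ i, ∑ j, A i j = 1)
    (hcols : ∀ j, ∑ i, A i j = 1)
    (hnormal : Aᵀ * A = A * Aᵀ)
    (hirr : ∀ i j, ∃ k : ℕ, 0 < (A ^ k) i j)
    (hdiag : ∀ i, 0 < A i i)
    -- spectral decomposition of `A` into orthogonal projectors onto its `Q` distinct
    -- eigenspaces, with eigenvalues ordered by decreasing modulus, `λ₁ = 1 > |λ₂|`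
    (lam : Fin Q → ℂ) (P : Fin Q → Matrix (Fin M) (Fin M) ℂ)
    (hdecomp : A.map (fun x => (x : ℂ)) = ∑ q, lam q • P q)
    (hinj : Function.Injective lam)
    (hherm : ∀ q, (P q)ᴴ = P q)
    (hidem : ∀ q, P q * P q = P q)
    (horth : ∀ q q', q ≠ q' → P q * P q' = 0)
    (hPsum : ∑ q, P q = 1)
    (hord : ∀ q q' : Fin Q, q ≤ q' → ‖lam q'‖ ≤ ‖lam q‖)
    (hlam1 : ∀ q : Fin Q, (q : ℕ) = 0 → lam q = 1)
    (hP1 : ∀ q : Fin Q, (q : ℕ) = 0 → P q = Matrix.of fun _ _ => (M : ℂ)⁻¹)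
    (lam2 : ℝ) (hlam2 : lam2 = ‖lam ⟨1, hQ⟩‖) (hlam2lt : lam2 < 1)
    -- the local objective functions (A1), the global objective `F` and its
    -- nonempty set of global minimizers (A2), with minimum value `F*`
    (Fj : Fin M → EuclideanSpace ℝ (Fin n) → ℝ)
    (hconv : ∀ j, ConvexOn ℝ Set.univ (Fj j))
    (F : EuclideanSpace ℝ (Fin n) → ℝ) (hFdef : F = fun w => ∑ j, Fj j w)
    (Wstar : Set (EuclideanSpace ℝ (Fin n))) (hWstar : Wstar = {w | ∀ v, F w ≤ F v})
    (hWne : Wstar.Nonempty)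
    (Fstar : ℝ) (hFstar : ∀ w ∈ Wstar, F w = Fstar)
    -- deterministic iterates and full-batch subgradient matrices, with the
    -- decentralized update `W(k+1) = W(k) A - η G(k)` and constant learning rate
    (W G : ℕ → Matrix (Fin n) (Fin M) ℝ)
    (η : ℝ) (hη : 0 < η)
    (hupd : ∀ k, W (k + 1) = W k * A - η • G k)
    (hsub : ∀ k j, IsSubgradAt (Fj j) (col (G k) j) (col (W k) j))
    -- every subgradient of every `Fⱼ` has Euclidean norm at most `L`
    (L : ℝ)
    (hL : ∀ (j : Fin M) (w gsub : EuclideanSpace ℝ (Fin n)),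
      IsSubgradAt (Fj j) gsub w → ‖gsub‖ ≤ L)
    (R : ℝ) (hR : R = frobSq (W 0))
    (i : Fin M) (K : ℕ) (hK : 1 ≤ K) :
    F (timeAvg K fun k => col (W k) i) - Fstar ≤
      (M : ℝ) / (2 * η * K) * Metric.infDist (colAvg (W 0)) Wstar ^ 2
      + η * M * L ^ 2 / 2
      + L * (3 * ((M : ℝ) * Real.sqrt M) * Real.sqrt R / K) * ((1 - lam2 ^ K) / (1 - lam2))
      + 3 * η * ((M : ℝ) * Real.sqrt M) * L ^ 2 / (1 - lam2) *
          (1 - (1 / (K : ℝ)) * ((1 - lam2 ^ K) / (1 - lam2))) := by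
  classical
  have hM' : (0 : ℝ) < M := by exact_mod_cast hM
  have hM1 : (1 : ℝ) ≤ M := by exact_mod_cast hM
  have hK' : (0 : ℝ) < K := by exact_mod_cast hK
  have hL0 : 0 ≤ L := le_trans (norm_nonneg _) (hL i _ _ (hsub 0 i))
  have hlam2nn : 0 ≤ lam2 := hlam2 ▸ norm_nonneg _
  have hden : 0 < 1 - lam2 := by linarith
  have hsqrtM1 : 1 ≤ Real.sqrt M := by
    rw [show (1 : ℝ) = Real.sqrt 1 by simp]
    exact Real.sqrt_le_sqrt hM1
  have hsqrtMnn : 0 ≤ Real.sqrt (M : ℝ) := Real.sqrt_nonneg _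
  have hsqrtMleM : Real.sqrt M ≤ M := by
    calc Real.sqrt (M : ℝ) ≤ Real.sqrt ((M : ℝ) ^ 2) := Real.sqrt_le_sqrt (by nlinarith)
      _ = M := Real.sqrt_sq hM'.le
  have hRnn : 0 ≤ Real.sqrt R := Real.sqrt_nonneg _
  -- Lipschitz property of each local objective
  have hlip : ∀ (j : Fin M) x y, Fj j x ≤ Fj j y + L * ‖x - y‖ := by
    intro j x y
    obtain ⟨g, hg⟩ := S8.exists_subgrad (Fj j) (hconv j) x
    have h1 := hg y
    have h2 : |(inner ℝ g (y - x) : ℝ)| ≤ ‖g‖ * ‖y - x‖ := abs_real_inner_le_norm g (y - x)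
    have h3 : ‖g‖ ≤ L := hL j x g hg
    have h4 : ‖g‖ * ‖y - x‖ ≤ L * ‖x - y‖ := by
      rw [norm_sub_rev y x]
      exact mul_le_mul_of_nonneg_right h3 (norm_nonneg _)
    have h5 := neg_abs_le (inner ℝ g (y - x) : ℝ)
    linarith
  -- continuity of F and existence of a nearest minimizer
  have hFcont : Continuous F := by
    rw [hFdef]
    apply continuous_finset_sum
    intro j _
    have h := (hconv j).continuousOn isOpen_univ
    rwa [continuousOn_univ] at h
  have hWclosed : IsClosed Wstar := by
    rw [hWstar]
    have h : {w : EuclideanSpace ℝ (Fin n) | ∀ v, F w ≤ F v}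
        = ⋂ v, {w | F w ≤ F v} := by ext w; simp
    rw [h]
    exact isClosed_iInter fun v => isClosed_le hFcont continuous_const
  obtain ⟨wst, hwstmem, hwstd⟩ := hWclosed.exists_infDist_eq_dist hWne (colAvg (W 0))
  have hFwst : F wst = Fstar := hFstar wst hwstmem
  -- subgradient norms
  have hGcol : ∀ k j, ‖_root_.col (G k) j‖ ≤ L := fun k j => hL j _ _ (hsub k j)
  have hGfrob : ∀ k, frobNorm (G k) ≤ Real.sqrt M * L := by
    intro k
    have h1 : frobSq (G k) ≤ M * L ^ 2 := by
      rw [S8.frobSq_eq_sum_col]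
      calc ∑ j, ‖_root_.col (G k) j‖ ^ 2 ≤ ∑ _j : Fin M, L ^ 2 :=
            Finset.sum_le_sum fun j _ => pow_le_pow_left₀ (norm_nonneg _) (hGcol k j) 2
        _ = M * L ^ 2 := by
            rw [Finset.sum_const, Finset.card_univ, Fintype.card_fin, nsmul_eq_mul]
    calc frobNorm (G k) ≤ Real.sqrt (M * L ^ 2) := Real.sqrt_le_sqrt h1
      _ = Real.sqrt M * L := by
          rw [Real.sqrt_mul (by positivity), Real.sqrt_sq hL0]
  have hgbar : ∀ k, ‖colAvg (G k)‖ ≤ L := by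
    intro k
    rw [S8.colAvg_smul_sum]
    calc ‖(M : ℝ)⁻¹ • ∑ j, _root_.col (G k) j‖ = (M : ℝ)⁻¹ * ‖∑ j, _root_.col (G k) j‖ := by
          rw [norm_smul, Real.norm_eq_abs, abs_of_nonneg (by positivity)]
      _ ≤ (M : ℝ)⁻¹ * ∑ j, ‖_root_.col (G k) j‖ :=
          mul_le_mul_of_nonneg_left (norm_sum_le _ _) (by positivity)
      _ ≤ (M : ℝ)⁻¹ * (M * L) := by
          apply mul_le_mul_of_nonneg_left _ (by positivity)
          calc ∑ j, ‖_root_.col (G k) j‖ ≤ ∑ _j : Fin M, L := Finset.sum_le_sum fun j _ => hGcol k j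
            _ = M * L := by
                rw [Finset.sum_const, Finset.card_univ, Fintype.card_fin, nsmul_eq_mul]
      _ = L := by field_simp
  -- evolution of the average
  have hrec : ∀ k, colAvg (W (k + 1)) = colAvg (W k) - η • colAvg (G k) := by
    intro k
    rw [hupd k, S8.colAvg_sub_smul, S8.colAvg_mul_right _ A hrows]
  have hd2 : ∀ k, ‖colAvg (W (k + 1)) - wst‖ ^ 2
      = ‖colAvg (W k) - wst‖ ^ 2
        - 2 * η * (inner ℝ (colAvg (G k)) (colAvg (W k) - wst) : ℝ)
        + η ^ 2 * ‖colAvg (G k)‖ ^ 2 := by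
    intro k
    rw [hrec k, sub_right_comm, norm_sub_sq_real, real_inner_smul_right, norm_smul,
      Real.norm_eq_abs, mul_pow, sq_abs, real_inner_comm]
    ring
  -- consensus recursion
  have hbound : ∀ q : Fin Q, (q : ℕ) ≠ 0 → ‖lam q‖ ≤ lam2 := by
    intro q hq
    rw [hlam2]
    apply hord
    rw [Fin.le_def]
    simpa using Nat.one_le_iff_ne_zero.mpr hq
  have herec : ∀ k, frobNorm (ctr (W (k + 1)))
      ≤ lam2 * frobNorm (ctr (W k)) + η * (Real.sqrt M * L) := by
    intro k
    have hctrrec : ctr (W (k + 1)) = ctr (W k * A) - η • ctr (G k) := by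
      rw [hupd k, S8.ctr_sub_smul]
    calc frobNorm (ctr (W (k + 1))) = frobNorm (ctr (W k * A) - η • ctr (G k)) := by
          rw [hctrrec]
      _ ≤ frobNorm (ctr (W k * A)) + η * frobNorm (ctr (G k)) :=
          S8.frobNorm_sub_smul_le _ _ _ hη.le
      _ ≤ lam2 * frobNorm (ctr (W k)) + η * (Real.sqrt M * L) := by
          apply add_le_add
          · exact S8.spectral_contract hM hQ A lam P hdecomp hherm hidem horth hPsum hP1
              lam2 hlam2nn hbound (W k)
          · exact mul_le_mul_of_nonneg_left
              ((S8.frobNorm_ctr_le hM _).trans (hGfrob k)) hη.le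
  have hebound : ∀ k, frobNorm (ctr (W k))
      ≤ lam2 ^ k * Real.sqrt R + η * (Real.sqrt M * L) * ∑ s ∈ Finset.range k, lam2 ^ s := by
    intro k
    induction k with
    | zero =>
        simpa using (S8.frobNorm_ctr_le hM (W 0)).trans (le_of_eq (by rw [frobNorm, ← hR]))
    | succ k ih =>
        have hmono := mul_le_mul_of_nonneg_left ih hlam2nn
        calc frobNorm (ctr (W (k + 1))) ≤ lam2 * frobNorm (ctr (W k)) + η * (Real.sqrt M * L) :=
              herec k
          _ ≤ lam2 * (lam2 ^ k * Real.sqrt R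
                + η * (Real.sqrt M * L) * ∑ s ∈ Finset.range k, lam2 ^ s)
                + η * (Real.sqrt M * L) := by linarith
          _ = lam2 ^ (k + 1) * Real.sqrt R
                + η * (Real.sqrt M * L) * ∑ s ∈ Finset.range (k + 1), lam2 ^ s := by
              rw [geom_sum_succ]
              ring
  have hennn : ∀ k, 0 ≤ frobNorm (ctr (W k)) := fun k => S8.frobNorm_nonneg _
  -- per-step objective bound
  have hstep : ∀ k, F (_root_.col (W k) i) - Fstar
      ≤ M * (inner ℝ (colAvg (G k)) (colAvg (W k) - wst) : ℝ)
        + 3 * M * L * frobNorm (ctr (W k)) := by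
    intro k
    have hcol : ∀ j, ‖_root_.col (W k) j - colAvg (W k)‖ ≤ frobNorm (ctr (W k)) := by
      intro j
      rw [← S8.col_ctr]
      exact S8.norm_col_le _ j
    have hcolsum : ∑ j, ‖_root_.col (W k) j - colAvg (W k)‖
        ≤ Real.sqrt M * frobNorm (ctr (W k)) := by
      have h := S8.sum_norm_col_le (ctr (W k))
      simpa [S8.col_ctr] using h
    have hperj : ∀ j, Fj j (_root_.col (W k) i)
        ≤ Fj j wst + (inner ℝ (_root_.col (G k) j) (colAvg (W k) - wst) : ℝ)
          + 2 * L * ‖_root_.col (W k) j - colAvg (W k)‖ + L * ‖_root_.col (W k) i - colAvg (W k)‖ := by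
      intro j
      have h1 := hlip j (_root_.col (W k) i) (_root_.col (W k) j)
      have h2 := hsub k j wst
      have h3 : (inner ℝ (_root_.col (G k) j) (wst - _root_.col (W k) j) : ℝ)
          = -(inner ℝ (_root_.col (G k) j) (_root_.col (W k) j - wst) : ℝ) := by
        rw [show wst - _root_.col (W k) j = -(_root_.col (W k) j - wst) by abel, inner_neg_right]
      have h4 : (inner ℝ (_root_.col (G k) j) (_root_.col (W k) j - wst) : ℝ)
          = (inner ℝ (_root_.col (G k) j) (colAvg (W k) - wst) : ℝ)
            + (inner ℝ (_root_.col (G k) j) (_root_.col (W k) j - colAvg (W k)) : ℝ) := by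
        rw [← inner_add_right]
        congr 1
        abel
      have h5 : (inner ℝ (_root_.col (G k) j) (_root_.col (W k) j - colAvg (W k)) : ℝ)
          ≤ L * ‖_root_.col (W k) j - colAvg (W k)‖ := by
        calc (inner ℝ (_root_.col (G k) j) (_root_.col (W k) j - colAvg (W k)) : ℝ)
            ≤ ‖_root_.col (G k) j‖ * ‖_root_.col (W k) j - colAvg (W k)‖ := real_inner_le_norm _ _
          _ ≤ L * ‖_root_.col (W k) j - colAvg (W k)‖ :=
              mul_le_mul_of_nonneg_right (hGcol k j) (norm_nonneg _)
      have h6 : ‖_root_.col (W k) i - _root_.col (W k) j‖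
          ≤ ‖_root_.col (W k) i - colAvg (W k)‖ + ‖_root_.col (W k) j - colAvg (W k)‖ := by
        rw [show _root_.col (W k) i - _root_.col (W k) j
          = (_root_.col (W k) i - colAvg (W k)) - (_root_.col (W k) j - colAvg (W k)) by abel]
        exact norm_sub_le _ _
      have h7 := mul_le_mul_of_nonneg_left h6 hL0
      rw [h3] at h2
      linarith
    have hsum : ∑ j, Fj j (_root_.col (W k) i)
        ≤ ∑ j, (Fj j wst + (inner ℝ (_root_.col (G k) j) (colAvg (W k) - wst) : ℝ)
          + 2 * L * ‖_root_.col (W k) j - colAvg (W k)‖ + L * ‖_root_.col (W k) i - colAvg (W k)‖) :=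
      Finset.sum_le_sum fun j _ => hperj j
    have hsum2 : ∑ j, (Fj j wst + (inner ℝ (_root_.col (G k) j) (colAvg (W k) - wst) : ℝ)
          + 2 * L * ‖_root_.col (W k) j - colAvg (W k)‖ + L * ‖_root_.col (W k) i - colAvg (W k)‖)
        = F wst + (∑ j, (inner ℝ (_root_.col (G k) j) (colAvg (W k) - wst) : ℝ))
          + 2 * L * (∑ j, ‖_root_.col (W k) j - colAvg (W k)‖)
          + M * (L * ‖_root_.col (W k) i - colAvg (W k)‖) := by
      rw [Finset.sum_add_distrib, Finset.sum_add_distrib, Finset.sum_add_distrib,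
        Finset.sum_const, Finset.card_univ, Fintype.card_fin, nsmul_eq_mul, hFdef,
        ← Finset.mul_sum]
    have hinnersum : ∑ j, (inner ℝ (_root_.col (G k) j) (colAvg (W k) - wst) : ℝ)
        = M * (inner ℝ (colAvg (G k)) (colAvg (W k) - wst) : ℝ) := by
      rw [S8.colAvg_smul_sum (G k), real_inner_smul_left, sum_inner]
      field_simp
    rw [hsum2, hinnersum, hFwst] at hsum
    have hFk : F (_root_.col (W k) i) = ∑ j, Fj j (_root_.col (W k) i) := by rw [hFdef]
    have hA1 : 2 * L * (∑ j, ‖_root_.col (W k) j - colAvg (W k)‖)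
        ≤ 2 * L * (Real.sqrt M * frobNorm (ctr (W k))) :=
      mul_le_mul_of_nonneg_left hcolsum (by positivity)
    have hA2 : M * (L * ‖_root_.col (W k) i - colAvg (W k)‖)
        ≤ M * (L * frobNorm (ctr (W k))) := by
      apply mul_le_mul_of_nonneg_left _ hM'.le
      exact mul_le_mul_of_nonneg_left (hcol i) hL0
    have hA3 : 2 * L * (Real.sqrt M * frobNorm (ctr (W k))) + M * (L * frobNorm (ctr (W k)))
        ≤ 3 * M * L * frobNorm (ctr (W k)) := by
      nlinarith [mul_nonneg (mul_nonneg hL0 (hennn k)) (sub_nonneg.mpr hsqrtMleM)]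
    rw [hFk]
    linarith
  -- summed inner-product bound
  have hinrsum : 2 * η * (∑ k ∈ Finset.range K,
        (inner ℝ (colAvg (G k)) (colAvg (W k) - wst) : ℝ))
      ≤ ‖colAvg (W 0) - wst‖ ^ 2 + η ^ 2 * (K * L ^ 2) := by
    have h2 : ∀ k ∈ Finset.range K, 2 * η * (inner ℝ (colAvg (G k)) (colAvg (W k) - wst) : ℝ)
        = (‖colAvg (W k) - wst‖ ^ 2 - ‖colAvg (W (k + 1)) - wst‖ ^ 2)
          + η ^ 2 * ‖colAvg (G k)‖ ^ 2 := by
      intro k _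
      have := hd2 k
      linarith
    rw [Finset.mul_sum, Finset.sum_congr rfl h2, Finset.sum_add_distrib,
      Finset.sum_range_sub' (fun k => ‖colAvg (W k) - wst‖ ^ 2) K]
    have h3 : ∑ k ∈ Finset.range K, η ^ 2 * ‖colAvg (G k)‖ ^ 2
        ≤ ∑ _k ∈ Finset.range K, η ^ 2 * L ^ 2 :=
      Finset.sum_le_sum fun k _ => mul_le_mul_of_nonneg_left
        (pow_le_pow_left₀ (norm_nonneg _) (hgbar k) 2) (sq_nonneg η)
    rw [Finset.sum_const, Finset.card_range, nsmul_eq_mul] at h3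
    nlinarith [sq_nonneg ‖colAvg (W K) - wst‖]
  -- sum of consensus errors
  have hesum : ∑ k ∈ Finset.range K, frobNorm (ctr (W k))
      ≤ Real.sqrt R * ((1 - lam2 ^ K) / (1 - lam2))
        + η * (Real.sqrt M * L) * (((K : ℝ) - (1 - lam2 ^ K) / (1 - lam2)) / (1 - lam2)) := by
    have hgeom : ∀ m : ℕ, ∑ s ∈ Finset.range m, lam2 ^ s = (1 - lam2 ^ m) / (1 - lam2) := by
      intro m
      rw [geom_sum_eq (by linarith : lam2 ≠ 1) m]
      rw [show lam2 - 1 = -(1 - lam2) by ring, show lam2 ^ m - 1 = -(1 - lam2 ^ m) by ring,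
        neg_div_neg_eq]
    calc ∑ k ∈ Finset.range K, frobNorm (ctr (W k))
        ≤ ∑ k ∈ Finset.range K, (lam2 ^ k * Real.sqrt R
            + η * (Real.sqrt M * L) * ∑ s ∈ Finset.range k, lam2 ^ s) :=
          Finset.sum_le_sum fun k _ => hebound k
      _ = (∑ k ∈ Finset.range K, lam2 ^ k) * Real.sqrt R
            + η * (Real.sqrt M * L)
              * ∑ k ∈ Finset.range K, ∑ s ∈ Finset.range k, lam2 ^ s := by
          rw [Finset.sum_add_distrib, ← Finset.sum_mul, ← Finset.mul_sum]
      _ = Real.sqrt R * ((1 - lam2 ^ K) / (1 - lam2))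
            + η * (Real.sqrt M * L)
              * (((K : ℝ) - (1 - lam2 ^ K) / (1 - lam2)) / (1 - lam2)) := by
          have hcg : ∑ k ∈ Finset.range K, (∑ s ∈ Finset.range k, lam2 ^ s)
              = ∑ k ∈ Finset.range K, (1 - lam2 ^ k) / (1 - lam2) :=
            Finset.sum_congr rfl fun k _ => hgeom k
          rw [hcg, ← Finset.sum_div, Finset.sum_sub_distrib, Finset.sum_const,
            Finset.card_range, nsmul_eq_mul, mul_one, hgeom K]
          ring
  -- Jensen step
  have hFconv : ConvexOn ℝ Set.univ F := by
    rw [hFdef]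
    have hind : ∀ s : Finset (Fin M), ConvexOn ℝ Set.univ (fun w => ∑ j ∈ s, Fj j w) := by
      intro s
      induction s using Finset.induction_on with
      | empty => simpa [Function.const] using convexOn_const (0 : ℝ) convex_univ
      | @insert j s hnot ih =>
          simp only [Finset.sum_insert hnot]
          exact (hconv _).add ih
    exact hind Finset.univ
  have hKne : (K : ℝ) ≠ 0 := ne_of_gt hK'
  have hJ : F (timeAvg K fun k => _root_.col (W k) i)
      ≤ (∑ k ∈ Finset.range K, F (_root_.col (W k) i)) / K := by
    have h1 : timeAvg K (fun k => _root_.col (W k) i)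
        = ∑ k ∈ Finset.range K, ((K : ℝ)⁻¹) • _root_.col (W k) i := by
      ext l
      simp only [timeAvg]
      rw [WithLp.ofLp_sum, Finset.sum_apply]
      simp only [PiLp.smul_apply, smul_eq_mul]
      rw [← Finset.mul_sum]
      exact div_eq_inv_mul _ _
    rw [h1]
    have h2 := hFconv.map_sum_le (t := Finset.range K) (w := fun _ => (K : ℝ)⁻¹)
      (p := fun k => _root_.col (W k) i) (fun _ _ => by positivity)
      (by rw [Finset.sum_const, Finset.card_range, nsmul_eq_mul]; field_simp)
      (fun _ _ => Set.mem_univ _)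
    refine h2.trans (le_of_eq ?_)
    simp only [smul_eq_mul]
    rw [← Finset.mul_sum]
    exact (div_eq_inv_mul _ _).symm
  -- summed per-step bound
  have hsumstep : ∑ k ∈ Finset.range K, (F (_root_.col (W k) i) - Fstar)
      ≤ M * (∑ k ∈ Finset.range K, (inner ℝ (colAvg (G k)) (colAvg (W k) - wst) : ℝ))
        + 3 * M * L * ∑ k ∈ Finset.range K, frobNorm (ctr (W k)) := by
    calc ∑ k ∈ Finset.range K, (F (_root_.col (W k) i) - Fstar)
        ≤ ∑ k ∈ Finset.range K, (M * (inner ℝ (colAvg (G k)) (colAvg (W k) - wst) : ℝ)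
            + 3 * M * L * frobNorm (ctr (W k))) := Finset.sum_le_sum fun k _ => hstep k
      _ = _ := by rw [Finset.sum_add_distrib, ← Finset.mul_sum, ← Finset.mul_sum]
  set SK := (1 - lam2 ^ K) / (1 - lam2) with hSKdef
  have hSKnn : 0 ≤ SK := by
    apply div_nonneg _ hden.le
    have h := pow_le_one₀ hlam2nn hlam2lt.le (n := K)
    linarith
  have hdist : ‖colAvg (W 0) - wst‖ = Metric.infDist (colAvg (W 0)) Wstar := by
    rw [hwstd, dist_eq_norm]
  have hfinal : ∑ k ∈ Finset.range K, (F (_root_.col (W k) i) - Fstar)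
      ≤ M * ((‖colAvg (W 0) - wst‖ ^ 2 + η ^ 2 * (K * L ^ 2)) / (2 * η))
        + 3 * M * L * (Real.sqrt R * SK
          + η * (Real.sqrt M * L) * (((K : ℝ) - SK) / (1 - lam2))) := by
    have hS1 : (∑ k ∈ Finset.range K, (inner ℝ (colAvg (G k)) (colAvg (W k) - wst) : ℝ))
        ≤ (‖colAvg (W 0) - wst‖ ^ 2 + η ^ 2 * (K * L ^ 2)) / (2 * η) := by
      rw [le_div_iff₀ (by positivity)]
      calc (∑ k ∈ Finset.range K, (inner ℝ (colAvg (G k)) (colAvg (W k) - wst) : ℝ)) * (2 * η)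
          = 2 * η * (∑ k ∈ Finset.range K,
              (inner ℝ (colAvg (G k)) (colAvg (W k) - wst) : ℝ)) := by ring
        _ ≤ _ := hinrsum
    have h3 := mul_le_mul_of_nonneg_left hS1 hM'.le
    have h4 := mul_le_mul_of_nonneg_left hesum (by positivity : (0 : ℝ) ≤ 3 * M * L)
    exact hsumstep.trans (add_le_add h3 h4)
  have hstep2 : F (timeAvg K fun k => _root_.col (W k) i) - Fstar
      ≤ (∑ k ∈ Finset.range K, (F (_root_.col (W k) i) - Fstar)) / K := by
    have h5 : (∑ k ∈ Finset.range K, (F (_root_.col (W k) i) - Fstar)) / K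
        = (∑ k ∈ Finset.range K, F (_root_.col (W k) i)) / K - Fstar := by
      rw [Finset.sum_sub_distrib, Finset.sum_const, Finset.card_range, nsmul_eq_mul, sub_div]
      field_simp
    rw [h5]
    exact sub_le_sub_right hJ Fstar
  have hfinal2 : ∑ k ∈ Finset.range K, (F (_root_.col (W k) i) - Fstar)
      ≤ M * ((‖colAvg (W 0) - wst‖ ^ 2 + η ^ 2 * (K * L ^ 2)) / (2 * η))
        + 3 * M * L * (Real.sqrt M * Real.sqrt R * SK
          + η * (Real.sqrt M * L) * (((K : ℝ) - SK) / (1 - lam2))) := by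
    refine hfinal.trans ?_
    have h6 : Real.sqrt R * SK ≤ Real.sqrt M * Real.sqrt R * SK := by
      nlinarith [mul_nonneg (mul_nonneg (sub_nonneg.mpr hsqrtM1) hRnn) hSKnn]
    have h7 := mul_le_mul_of_nonneg_left (add_le_add_right h6
      (η * (Real.sqrt M * L) * (((K : ℝ) - SK) / (1 - lam2))))
      (by positivity : (0:ℝ) ≤ 3 * M * L)
    linarith
  refine le_trans hstep2 (le_trans ((div_le_div_iff_of_pos_right hK').mpr hfinal2) ?_)
  rw [← hdist]
  have hηne : η ≠ 0 := ne_of_gt hη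
  have hdenne : (1 : ℝ) - lam2 ≠ 0 := ne_of_gt hden
  have heq : (M * ((‖colAvg (W 0) - wst‖ ^ 2 + η ^ 2 * (K * L ^ 2)) / (2 * η))
        + 3 * M * L * (Real.sqrt M * Real.sqrt R * SK
          + η * (Real.sqrt M * L) * (((K : ℝ) - SK) / (1 - lam2)))) / K
      = (M : ℝ) / (2 * η * K) * ‖colAvg (W 0) - wst‖ ^ 2
        + η * M * L ^ 2 / 2
        + L * (3 * ((M : ℝ) * Real.sqrt M) * Real.sqrt R / K) * SK
        + 3 * η * ((M : ℝ) * Real.sqrt M) * L ^ 2 / (1 - lam2) * (1 - (1 / (K : ℝ)) * SK) := by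
    field_simp
    ring
  exact le_of_eq heq

end
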